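/- Let (Ω, P) be a probability space, N ≥ 2, u† : Fin N → ℝ with Σᵢ u†(i) = 0, and σ ≥ 0. Fix i ∈ Fin N, and for each j ≠ i let ε_{i,j} : Ω → ℝ be a square-integrable random variable with E[ε_{i,j}] = 0, Var[ε_{i,j}] = σ², and Cov[ε_{i,j}, ε_{i,k}] = 0 for all j ≠ k. Define ρ_{i,j}(ω) = u†(i) − u†(j) + ε_{i,j}(ω) and U(i)(ω) = (1/N)·Σ_{j ≠ i} ρ_{i,j}(ω). Then for every δ > 0, P({ω : |U(i)(ω) − u†(i)| ≥ δ}) ≤ (N−1)·σ²/(N²·δ²); in particular the deviation probability is bounded by σ²/(N·δ²), so the potential method is a consistent estimator of the utility as the number of securities N grows. -/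

import Mathlib

open Finset MeasureTheory ProbabilityTheory

/-- Chebyshev-type consistency bound for the potential-method utility estimator:
the deviation probability is bounded by `(N-1)σ²/(N²δ²)`, and in particular by
`σ²/(Nδ²)`. -/
theorem potential_method_utility_consistency
    {Ω : Type*} [MeasurableSpace Ω] (μ : Measure Ω) [IsProbabilityMeasure μ]
    (N : ℕ) (hN : 2 ≤ N)
    (udag : Fin N → ℝ) (hu : ∑ k, udag k = 0)
    (σ : ℝ) (hσ : 0 ≤ σ) (i : Fin N)
    (ε : Fin N → Ω → ℝ)
    (hL2 : ∀ j, j ≠ i → MemLp (ε j) 2 μ)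
    (hmean : ∀ j, j ≠ i → ∫ ω, ε j ω ∂μ = 0)
    (hvar : ∀ j, j ≠ i → variance (ε j) μ = σ ^ 2)
    (hcov : ∀ j k, j ≠ i → k ≠ i → j ≠ k →
      (∫ ω, ε j ω * ε k ω ∂μ) - (∫ ω, ε j ω ∂μ) * (∫ ω, ε k ω ∂μ) = 0)
    (ρ : Fin N → Ω → ℝ)
    (hρ : ∀ j, j ≠ i → ∀ ω, ρ j ω = udag i - udag j + ε j ω)
    (U : Ω → ℝ)
    (hU : ∀ ω, U ω = (1 / (N : ℝ)) * ∑ j ∈ univ \ {i}, ρ j ω) :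
    ∀ δ : ℝ, 0 < δ →
      μ {ω | δ ≤ |U ω - udag i|} ≤
        ENNReal.ofReal (((N : ℝ) - 1) * σ ^ 2 / ((N : ℝ) ^ 2 * δ ^ 2)) ∧
      μ {ω | δ ≤ |U ω - udag i|} ≤
        ENNReal.ofReal (σ ^ 2 / ((N : ℝ) * δ ^ 2)) := by
  intro δ hδ
  have hN0 : (0:ℝ) < N := by
    have : (2:ℝ) ≤ N := by exact_mod_cast hN
    linarith
  set s : Finset (Fin N) := univ \ {i} with hs
  have hmem : ∀ j ∈ s, j ≠ i := fun j hj => by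
    simpa [hs, Finset.mem_sdiff] using hj
  set S : Ω → ℝ := fun ω => ∑ j ∈ s, ε j ω with hSdef
  have hL2S : MemLp S 2 μ := by
    have h := memLp_finset_sum' s fun j (hj : j ∈ s) => hL2 j (hmem j hj)
    convert h using 1
    ext ω
    simp [hSdef]
  have hintε : ∀ j ∈ s, Integrable (ε j) μ := fun j hj =>
    (hL2 j (hmem j hj)).integrable one_le_two
  have hES : ∫ ω, S ω ∂μ = 0 := by
    rw [show (∫ ω, S ω ∂μ) = ∫ ω, ∑ j ∈ s, ε j ω ∂μ from rfl,
      integral_finset_sum s hintε]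
    exact Finset.sum_eq_zero fun j hj => hmean j (hmem j hj)
  have hcard : s.card = N - 1 := by
    rw [hs, Finset.card_univ_diff]
    simp
  have hcardR : (s.card : ℝ) = (N : ℝ) - 1 := by
    rw [hcard, Nat.cast_sub (by omega)]
    simp
  have hmul : ∀ j ∈ s, ∀ k ∈ s, Integrable (fun ω => ε j ω * ε k ω) μ := by
    intro j hj k hk
    have h := ((hL2 k (hmem k hk)).smul (r := 1) (hL2 j (hmem j hj))).integrable le_rfl
    simpa [smul_eq_mul, mul_comm, Pi.mul_def] using h
  have hsq : ∫ ω, S ω ^ 2 ∂μ = ((N : ℝ) - 1) * σ ^ 2 := by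
    have h1 : ∀ ω, S ω ^ 2 = ∑ j ∈ s, ∑ k ∈ s, ε j ω * ε k ω := fun ω => by
      rw [sq]; exact Finset.sum_mul_sum s s _ _
    simp_rw [h1]
    rw [integral_finset_sum s fun j hj =>
      integrable_finset_sum s fun k hk => hmul j hj k hk]
    have h2 : ∀ j ∈ s, (∫ ω, ∑ k ∈ s, ε j ω * ε k ω ∂μ) = σ ^ 2 := by
      intro j hj
      rw [integral_finset_sum s fun k hk => hmul j hj k hk]
      rw [Finset.sum_eq_single_of_mem j hj]
      · have hv := hvar j (hmem j hj)
        rw [variance_eq_sub (hL2 j (hmem j hj)), hmean j (hmem j hj)] at hv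
        simpa [sq] using hv
      · intro k hk hkj
        have := hcov j k (hmem j hj) (hmem k hk) (Ne.symm hkj)
        rw [hmean j (hmem j hj), hmean k (hmem k hk)] at this
        linarith
    rw [Finset.sum_congr rfl h2, Finset.sum_const, nsmul_eq_mul, hcardR]
  have hvarS : variance S μ = ((N : ℝ) - 1) * σ ^ 2 := by
    rw [variance_eq_sub hL2S]
    have : (∫ ω, (S ^ 2) ω ∂μ) = ((N : ℝ) - 1) * σ ^ 2 := by
      simpa [sq] using hsq
    rw [this]
    simp [hES]
  have hUS : ∀ ω, U ω - udag i = S ω / N := by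
    intro ω
    rw [hU ω]
    have hsu : ∑ j ∈ s, udag j = -udag i := by
      have : ∑ j ∈ s, udag j = (∑ j, udag j) - udag i := by
        rw [hs, Finset.sum_sdiff_eq_sub (Finset.subset_univ _)]
        simp
      rw [this, hu]; ring
    have hsum : ∑ j ∈ s, ρ j ω = (N : ℝ) * udag i + S ω := by
      calc ∑ j ∈ s, ρ j ω = ∑ j ∈ s, (udag i - udag j + ε j ω) :=
            Finset.sum_congr rfl fun j hj => hρ j (hmem j hj) ω
        _ = (s.card : ℝ) * udag i - (∑ j ∈ s, udag j) + S ω := by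
            rw [Finset.sum_add_distrib, Finset.sum_sub_distrib, Finset.sum_const,
              nsmul_eq_mul]
        _ = (N : ℝ) * udag i + S ω := by rw [hcardR, hsu]; ring
    rw [hsum]
    field_simp
    ring
  have hset : {ω | δ ≤ |U ω - udag i|} = {ω | (N : ℝ) * δ ≤ |S ω - ∫ ω', S ω' ∂μ|} := by
    ext ω
    simp only [Set.mem_setOf_eq, hUS ω, hES, sub_zero, abs_div,
      abs_of_pos hN0]
    rw [le_div_iff₀ hN0, mul_comm]
  have hcheb := meas_ge_le_variance_div_sq (μ := μ) hL2S (mul_pos hN0 hδ)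
  rw [hvarS] at hcheb
  have hbound1 : μ {ω | δ ≤ |U ω - udag i|} ≤
      ENNReal.ofReal (((N : ℝ) - 1) * σ ^ 2 / ((N : ℝ) ^ 2 * δ ^ 2)) := by
    rw [hset]
    convert hcheb using 3
    rw [mul_pow]
  refine ⟨hbound1, hbound1.trans (ENNReal.ofReal_le_ofReal ?_)⟩
  have h1 : ((N : ℝ) - 1) * σ ^ 2 / ((N : ℝ) ^ 2 * δ ^ 2) ≤
      (N : ℝ) * σ ^ 2 / ((N : ℝ) ^ 2 * δ ^ 2) := by
    gcongr
    linarith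
  refine h1.trans (le_of_eq ?_)
  field_simp
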